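/- arXiv:2401.04911 — 6 statements merged into one kernel-verified Lean document; each statement's English description precedes it below -/
import Mathlib

section
/- Let A be the n×n circulant 0-1 matrix over ℚ whose first column is (c_0, c_1, …, c_{n-1}) with c_0 = ⋯ = c_{t-1} = 1 and c_t = ⋯ = c_{n-1} = 0, i.e., A_{ij} = c_{(i-j) mod n}. Then rank(A) = n - gcd(n, t) + 1. -/
open Finset

section aux

open Finset

-- test the sum bijection lemma
lemma aux_mulVec (n t : ℕ) [NeZero n] (htn : t ≤ n) (v : ZMod n → ℚ) (i : ZMod n) :
    ((Matrix.of fun i j : ZMod n => if (i - j).val < t then (1:ℚ) else 0).mulVec v) i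
      = ∑ k ∈ Finset.range t, v (i - (k : ZMod n)) := by
  simp only [Matrix.mulVec, dotProduct, Matrix.of_apply, ite_mul, one_mul, zero_mul]
  rw [Finset.sum_ite, Finset.sum_const_zero, add_zero]
  refine Finset.sum_nbij' (fun j => (i - j).val) (fun k => i - (k : ZMod n)) ?_ ?_ ?_ ?_ ?_
  · intro a ha
    simp only [Finset.mem_filter, Finset.mem_univ, true_and] at ha
    simpa using ha
  · intro a ha
    simp only [Finset.mem_range] at ha
    simp only [Finset.mem_filter, Finset.mem_univ, true_and]
    rw [sub_sub_cancel, ZMod.val_cast_of_lt (lt_of_lt_of_le ha htn)]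
    exact ha
  · intro a ha
    show i - ((i - a).val : ZMod n) = a
    rw [ZMod.natCast_val, ZMod.cast_id, sub_sub_cancel]
  · intro a ha
    simp only [Finset.mem_range] at ha
    show (i - (i - (a : ZMod n))).val = a
    rw [sub_sub_cancel, ZMod.val_cast_of_lt (lt_of_lt_of_le ha htn)]
  · intro a ha
    show v a = v (i - ((i - a).val : ZMod n))
    rw [ZMod.natCast_val, ZMod.cast_id, sub_sub_cancel]

-- telescoping: S(i+1) + v(i+1-t) = v(i+1) + S(i)
lemma aux_telescope (n t : ℕ) (v : ZMod n → ℚ) (i : ZMod n) :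
    (∑ k ∈ range t, v (i + 1 - (k : ZMod n))) + v (i + 1 - (t : ZMod n))
      = v (i + 1) + ∑ k ∈ range t, v (i - (k : ZMod n)) := by
  have h1 : ∑ k ∈ range (t + 1), v (i + 1 - (k : ZMod n))
      = (∑ k ∈ range t, v (i + 1 - (k : ZMod n))) + v (i + 1 - (t : ZMod n)) :=
    Finset.sum_range_succ _ t
  have h2 : ∑ k ∈ range (t + 1), v (i + 1 - (k : ZMod n))
      = (∑ k ∈ range t, v (i + 1 - ((k + 1 : ℕ) : ZMod n))) + v (i + 1 - ((0 : ℕ) : ZMod n)) :=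
    Finset.sum_range_succ' _ t
  rw [← h1, h2]
  push_cast
  ring_nf

-- iterate periodicity
lemma aux_iter (n c : ℕ) (v : ZMod n → ℚ) (h : ∀ i, v (i - (c : ZMod n)) = v i) :
    ∀ (m : ℕ) (i : ZMod n), v (i - ((c * m : ℕ) : ZMod n)) = v i := by
  intro m
  induction m with
  | zero => simp
  | succ m ih =>
    intro i
    have : ((c * (m + 1) : ℕ) : ZMod n) = ((c * m : ℕ) : ZMod n) + (c : ZMod n) := by
      push_cast; ring
    rw [this, ← sub_sub, h, ih]

-- t-periodic implies gcd-periodic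
lemma aux_t_to_g (n t : ℕ) (v : ZMod n → ℚ) (h : ∀ i, v (i - (t : ZMod n)) = v i) :
    ∀ i, v (i - ((Nat.gcd n t : ℕ) : ZMod n)) = v i := by
  have hadd : ∀ i, v (i + (t : ZMod n)) = v i := by
    intro i
    have := h (i + (t : ZMod n))
    rw [add_sub_cancel_right] at this
    exact this.symm
  have hz : ∀ (z : ℤ) (i : ZMod n), v (i + z • (t : ZMod n)) = v i := by
    intro z
    induction z using Int.induction_on with
    | zero => simp
    | succ k ihk =>
      intro i
      rw [add_zsmul, one_zsmul, ← add_assoc, hadd, ihk]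
    | pred k ihk =>
      intro i
      have key : i + (-(k:ℤ) - 1) • (t : ZMod n) + (t : ZMod n) = i + (-(k:ℤ)) • (t : ZMod n) := by
        rw [add_assoc]
        congr 1
        have h1 : (-(k:ℤ) - 1) • (t : ZMod n) + (1:ℤ) • (t : ZMod n) = (-(k:ℤ)) • (t:ZMod n) := by
          rw [← add_zsmul]; norm_num
        simpa using h1
      calc v (i + (-(k:ℤ)-1) • (t:ZMod n)) = v (i + (-(k:ℤ)-1) • (t:ZMod n) + (t:ZMod n)) :=
            (hadd _).symm
        _ = v (i + (-(k:ℤ)) • (t:ZMod n)) := by rw [key]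
        _ = v i := ihk i
  -- gcd = n * a + t * b
  have hb : ((Nat.gcd n t : ℕ) : ZMod n) = (Nat.gcdB n t : ℤ) • (t : ZMod n) := by
    have := Nat.gcd_eq_gcd_ab n t
    have h2 : ((Nat.gcd n t : ℤ) : ZMod n) = (((n : ℤ) * Nat.gcdA n t + (t : ℤ) * Nat.gcdB n t : ℤ) : ZMod n) := by
      exact_mod_cast congrArg (fun z : ℤ => (z : ZMod n)) this
    push_cast at h2
    rw [ZMod.natCast_self, zero_mul, zero_add] at h2
    rw [zsmul_eq_mul]
    push_cast
    rw [h2]; ring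
  intro i
  have := hz (Nat.gcdB n t) (i - ((Nat.gcd n t : ℕ) : ZMod n))
  rw [← hb, sub_add_cancel] at this
  exact this.symm

lemma aux_iter' (n c : ℕ) (v : ZMod n → ℚ) (h : ∀ i, v (i - (c : ZMod n)) = v i) :
    ∀ (m : ℕ) (i : ZMod n), v (i - ((c * m : ℕ) : ZMod n)) = v i := by
  intro m
  induction m with
  | zero => simp
  | succ m ih =>
    intro i
    have : ((c * (m + 1) : ℕ) : ZMod n) = ((c * m : ℕ) : ZMod n) + (c : ZMod n) := by
      push_cast; ring
    rw [this, ← sub_sub, h, ih]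

-- splitting the sum using g-periodicity
lemma aux_split (n g : ℕ) (v : ZMod n → ℚ) (h : ∀ i, v (i - (g : ZMod n)) = v i)
    (m : ℕ) (x : ZMod n) :
    ∑ k ∈ range (g * m), v (x - (k : ZMod n)) = m * ∑ k ∈ range g, v (x - (k : ZMod n)) := by
  induction m with
  | zero => simp
  | succ m ih =>
    have : g * (m + 1) = g * m + g := by ring
    rw [this, Finset.sum_range_add, ih]
    have h2 : ∀ k ∈ range g, v (x - ((g * m + k : ℕ) : ZMod n)) = v (x - (k : ZMod n)) := by
      intro k _
      have : x - ((g * m + k : ℕ) : ZMod n) = (x - (k : ZMod n)) - ((g * m : ℕ) : ZMod n) := by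
        push_cast; ring
      rw [this, aux_iter' n g v h m]
    rw [Finset.sum_congr rfl h2]
    push_cast
    ring

lemma aux_telescope' (n t : ℕ) (v : ZMod n → ℚ) (i : ZMod n) :
    (∑ k ∈ range t, v (i + 1 - (k : ZMod n))) + v (i + 1 - (t : ZMod n))
      = v (i + 1) + ∑ k ∈ range t, v (i - (k : ZMod n)) := by
  have h1 : ∑ k ∈ range (t + 1), v (i + 1 - (k : ZMod n))
      = (∑ k ∈ range t, v (i + 1 - (k : ZMod n))) + v (i + 1 - (t : ZMod n)) :=
    Finset.sum_range_succ _ t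
  have h2 : ∑ k ∈ range (t + 1), v (i + 1 - (k : ZMod n))
      = (∑ k ∈ range t, v (i + 1 - ((k + 1 : ℕ) : ZMod n))) + v (i + 1 - ((0 : ℕ) : ZMod n)) :=
    Finset.sum_range_succ' _ t
  rw [← h1, h2]
  push_cast
  ring_nf

-- shift invariance of window sums under periodicity
lemma aux_shift (n c : ℕ) [NeZero n] (v : ZMod n → ℚ) (h : ∀ j, v (j - (c : ZMod n)) = v j) :
    ∀ i : ZMod n, ∑ k ∈ range c, v (i - (k : ZMod n))
      = ∑ k ∈ range c, v ((0 : ZMod n) - (k : ZMod n)) := by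
  have step : ∀ i : ZMod n, ∑ k ∈ range c, v (i + 1 - (k : ZMod n))
      = ∑ k ∈ range c, v (i - (k : ZMod n)) := by
    intro i
    have := aux_telescope' n c v i
    rw [h (i + 1)] at this
    linarith
  have key : ∀ m : ℕ, ∑ k ∈ range c, v ((m : ZMod n) - (k : ZMod n))
      = ∑ k ∈ range c, v ((0 : ZMod n) - (k : ZMod n)) := by
    intro m
    induction m with
    | zero => simp
    | succ m ih =>
      have : ((m + 1 : ℕ) : ZMod n) = (m : ZMod n) + 1 := by push_cast; ring
      rw [this, step, ih]
  intro i
  have : i = ((i.val : ℕ) : ZMod n) := (ZMod.natCast_rightInverse i).symm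
  rw [this, key]

-- kernel characterization
lemma aux_ker (n t : ℕ) [NeZero n] (ht : 1 ≤ t) (htn : t ≤ n) (v : ZMod n → ℚ) :
    (∀ i : ZMod n, ∑ k ∈ range t, v (i - (k : ZMod n)) = 0) ↔
      ((∀ i, v (i - ((Nat.gcd n t : ℕ) : ZMod n)) = v i) ∧
        ∑ k ∈ range (Nat.gcd n t), v ((0 : ZMod n) - (k : ZMod n)) = 0) := by
  set g := Nat.gcd n t with hgdef
  have hg : 0 < g := Nat.gcd_pos_of_pos_right n ht
  have hgt : g ∣ t := Nat.gcd_dvd_right n t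
  have hm : g * (t / g) = t := Nat.mul_div_cancel' hgt
  have hmpos : 0 < t / g := Nat.div_pos (Nat.le_of_dvd ht hgt) hg
  constructor
  · intro hS
    have hper : ∀ j, v (j - (t : ZMod n)) = v j := by
      intro j
      have := aux_telescope' n t v (j - 1)
      rw [hS (j - 1 + 1), hS (j - 1), sub_add_cancel] at this
      linarith
    have hgper := aux_t_to_g n t v hper
    refine ⟨hgper, ?_⟩
    have := aux_split n g v hgper (t / g) 0
    rw [hm, hS 0] at this
    have hq : ((t / g : ℕ) : ℚ) ≠ 0 := by
      exact_mod_cast hmpos.ne'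
    rw [eq_comm, mul_eq_zero] at this
    rcases this with h | h
    · exact absurd h hq
    · simpa using h
  · rintro ⟨hgper, hsum⟩
    intro i
    have h1 : ∑ k ∈ range t, v (i - (k : ZMod n))
        = (t / g : ℕ) * ∑ k ∈ range g, v (i - (k : ZMod n)) := by
      conv_lhs => rw [← hm]
      exact aux_split n g v hgper (t / g) i
    rw [h1, aux_shift n g v hgper i, hsum, mul_zero]

lemma aux_mod_g (n g : ℕ) [NeZero n] (hg : 0 < g) (hgn : g ∣ n) (x : ZMod n) :
    (x + (g : ZMod n)).val % g = x.val % g := by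
  rw [ZMod.val_add, ZMod.val_natCast, Nat.mod_mod_of_dvd _ hgn]
  obtain ⟨c, hc⟩ := (Nat.dvd_mod_iff hgn).mpr (dvd_refl g)
  rw [hc, Nat.add_mul_mod_self_left]

end aux

/-- The rank of the `n × n` circulant 0-1 matrix whose first column is
`c_0 = ⋯ = c_{t-1} = 1`, `c_t = ⋯ = c_{n-1} = 0` equals `n - gcd(n,t) + 1`. -/
theorem rank_circulant_path_matrix (n t : ℕ) (ht : 1 ≤ t) (htn : t ≤ n) :
    (Matrix.of (fun i j : Fin n =>
      if (((i : ZMod n) - (j : ZMod n)).val < t) then (1 : ℚ) else 0)).rank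
      = n - Nat.gcd n t + 1 := by
  have hn : 0 < n := lt_of_lt_of_le ht htn
  haveI : NeZero n := ⟨hn.ne'⟩
  set g := Nat.gcd n t with hgdef
  have hg : 0 < g := Nat.gcd_pos_of_pos_right n ht
  have hgn : g ∣ n := Nat.gcd_dvd_left n t
  have hgle : g ≤ n := Nat.le_of_dvd hn hgn
  -- reindex to ZMod n
  set B : Matrix (ZMod n) (ZMod n) ℚ :=
    Matrix.of (fun i j : ZMod n => if (i - j).val < t then (1 : ℚ) else 0) with hB
  let e : Fin n ≃ ZMod n :=
    ⟨fun i => ((i : ℕ) : ZMod n), fun x => ⟨x.val, x.val_lt⟩,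
      fun i => Fin.ext (ZMod.val_cast_of_lt i.isLt),
      fun x => ZMod.natCast_rightInverse x⟩
  have hAB : (Matrix.of (fun i j : Fin n =>
      if (((i : ZMod n) - (j : ZMod n)).val < t) then (1 : ℚ) else 0))
      = B.submatrix e e := rfl
  rw [hAB, Matrix.rank_submatrix]
  -- characterize the kernel of B
  have hker : ∀ v : ZMod n → ℚ, v ∈ LinearMap.ker B.mulVecLin ↔
      ((∀ i, v (i - ((g : ℕ) : ZMod n)) = v i) ∧
        ∑ k ∈ range g, v ((0 : ZMod n) - (k : ZMod n)) = 0) := by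
    intro v
    rw [LinearMap.mem_ker, Matrix.mulVecLin_apply, ← aux_ker n t ht htn v]
    constructor
    · intro h i
      rw [← aux_mulVec n t htn v i, h]
      rfl
    · intro h
      funext i
      rw [aux_mulVec n t htn v i, h i]
      rfl
  -- the sum functional on Fin g → ℚ
  set σ : (Fin g → ℚ) →ₗ[ℚ] ℚ :=
    { toFun := fun w => ∑ k, w k
      map_add' := fun x y => by simp [Finset.sum_add_distrib]
      map_smul' := fun c x => by simp [Finset.mul_sum] } with hσ
  -- linear maps between kernels
  set φ : (ZMod n → ℚ) →ₗ[ℚ] (Fin g → ℚ) :=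
    LinearMap.funLeft ℚ ℚ (fun k : Fin g => -((k : ℕ) : ZMod n)) with hφ
  set ψ : (Fin g → ℚ) →ₗ[ℚ] (ZMod n → ℚ) :=
    LinearMap.funLeft ℚ ℚ (fun i : ZMod n => (⟨(-i).val % g, Nat.mod_lt _ hg⟩ : Fin g)) with hψ
  have hφ_apply : ∀ (v : ZMod n → ℚ) (k : Fin g), φ v k = v (-((k : ℕ) : ZMod n)) := fun _ _ => rfl
  have hψ_apply : ∀ (w : Fin g → ℚ) (i : ZMod n),
      ψ w i = w ⟨(-i).val % g, Nat.mod_lt _ hg⟩ := fun _ _ => rfl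
  -- ψ w is g-periodic
  have hψ_per : ∀ (w : Fin g → ℚ) (i : ZMod n), ψ w (i - ((g : ℕ) : ZMod n)) = ψ w i := by
    intro w i
    rw [hψ_apply, hψ_apply]
    congr 1
    apply Fin.ext
    show (-(i - (g : ZMod n))).val % g = (-i).val % g
    rw [neg_sub', sub_neg_eq_add]
    exact aux_mod_g n g hg hgn (-i)
  have h1 : ∀ v ∈ LinearMap.ker B.mulVecLin, φ v ∈ LinearMap.ker σ := by
    intro v hv
    obtain ⟨hper, hsum⟩ := (hker v).mp hv
    rw [LinearMap.mem_ker]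
    show ∑ k : Fin g, v (-((k : ℕ) : ZMod n)) = 0
    rw [Fin.sum_univ_eq_sum_range (fun k => v (-((k : ℕ) : ZMod n))) g]
    simpa using hsum
  have h2 : ∀ w ∈ LinearMap.ker σ, ψ w ∈ LinearMap.ker B.mulVecLin := by
    intro w hw
    rw [LinearMap.mem_ker] at hw
    rw [hker]
    refine ⟨hψ_per w, ?_⟩
    have hterm : ∀ k ∈ range g, ψ w ((0 : ZMod n) - (k : ZMod n))
        = w ⟨k % g, Nat.mod_lt _ hg⟩ := by
      intro k hk
      rw [hψ_apply]
      congr 1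
      apply Fin.ext
      show (-((0 : ZMod n) - (k : ZMod n))).val % g = k % g
      rw [zero_sub, neg_neg, ZMod.val_cast_of_lt (lt_of_lt_of_le (mem_range.mp hk) (le_trans hgle le_rfl))]
    rw [Finset.sum_congr rfl hterm]
    rw [← Fin.sum_univ_eq_sum_range (fun k => w ⟨k % g, Nat.mod_lt _ hg⟩) g]
    have : ∀ k : Fin g, w ⟨(k : ℕ) % g, Nat.mod_lt _ hg⟩ = w k := by
      intro k
      congr 1
      exact Fin.ext (Nat.mod_eq_of_lt k.isLt)
    rw [Fintype.sum_congr _ _ this]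
    exact hw
  have hleft : ∀ v ∈ LinearMap.ker B.mulVecLin, ψ (φ v) = v := by
    intro v hv
    obtain ⟨hper, _⟩ := (hker v).mp hv
    funext i
    rw [hψ_apply, hφ_apply]
    set r := (-i).val % g with hr
    set q := (-i).val / g with hqd
    have hrq : (-i).val = g * q + r := (Nat.div_add_mod (-i).val g).symm
    have hiter := aux_iter' n g v hper q (-(((r : ℕ)) : ZMod n))
    have harg : -((r : ℕ) : ZMod n) - ((g * q : ℕ) : ZMod n) = i := by
      have : (((-i).val : ℕ) : ZMod n) = -i := ZMod.natCast_rightInverse (-i)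
      rw [hrq] at this
      push_cast at this ⊢
      linear_combination -this
    rw [harg] at hiter
    exact hiter.symm
  have hright : ∀ w : Fin g → ℚ, φ (ψ w) = w := by
    intro w
    funext k
    rw [hφ_apply, hψ_apply]
    congr 1
    apply Fin.ext
    show (-(-((k : ℕ) : ZMod n))).val % g = (k : ℕ)
    rw [neg_neg, ZMod.val_cast_of_lt (lt_of_lt_of_le k.isLt hgle), Nat.mod_eq_of_lt k.isLt]
  -- the equivalence of kernels
  have eK : (LinearMap.ker B.mulVecLin) ≃ₗ[ℚ] (LinearMap.ker σ) :=
    LinearEquiv.ofLinear (φ.restrict h1) (ψ.restrict h2)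
      (by
        ext x
        exact congrFun (hright x.val) _)
      (by
        ext x
        exact congrFun (hleft x.val x.property) _)
  -- dimension of ker σ
  have hσ_surj : Function.Surjective σ := by
    intro c
    refine ⟨fun _ => c / g, ?_⟩
    show ∑ _k : Fin g, c / (g : ℚ) = c
    rw [Finset.sum_const, Finset.card_univ, Fintype.card_fin, nsmul_eq_mul]
    field_simp
  have hkerσ : Module.finrank ℚ (LinearMap.ker σ) = g - 1 := by
    have := LinearMap.finrank_range_add_finrank_ker σ
    rw [Module.finrank_fintype_fun_eq_card, Fintype.card_fin] at this
    rw [LinearMap.range_eq_top.mpr hσ_surj, finrank_top, Module.finrank_self] at this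
    omega
  -- rank–nullity for B
  have hrn := LinearMap.finrank_range_add_finrank_ker B.mulVecLin
  rw [Module.finrank_fintype_fun_eq_card, ZMod.card] at hrn
  have hkerB : Module.finrank ℚ (LinearMap.ker B.mulVecLin) = g - 1 := by
    rw [eK.finrank_eq, hkerσ]
  have hrank : B.rank = Module.finrank ℚ (LinearMap.range B.mulVecLin) := rfl
  rw [hrank]
  omega
end

section
/- Let n be a positive integer, t a positive integer with d = gcd(n,t), and let S = K[x_1,…,x_n] with indices taken modulo n. Define u_j = x_j x_{j+1} ⋯ x_{j+t-1} for j = 1,…,n. For each residue class i modulo d, let m_i = ∏_{j ≡ i (mod d), 1 ≤ j ≤ n} u_j. Then m_1 = m_2 = ⋯ = m_d = (x_1 ⋯ x_n)^{t/d} as monomials in S. -/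
open MvPolynomial

/-- Count of `a < m*d` with `a + i ≡ w (mod d)`. -/
lemma countA (d i w : ℕ) (hd : 0 < d) (m : ℕ) :
    ((Finset.range (m * d)).filter (fun a => (a + i) % d = w % d)).card = m := by
  set c : ℕ := (w + d - i % d) % d with hc
  have hcd : c < d := Nat.mod_lt _ hd
  have hci : (c + i) % d = w % d := by
    have hr : i % d < d := Nat.mod_lt _ hd
    have hqd : d * (i / d) + i % d = i := Nat.div_add_mod i d
    have h1 : (c + i) % d = (w + d - i % d + i) % d := by
      rw [hc, Nat.mod_add_mod]
    have h2 : w + d - i % d + i = w + d * (i / d + 1) := by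
      have := hqd; set q := d * (i / d); ring_nf; omega
    rw [h1, h2, Nat.add_mul_mod_self_left]
  conv_rhs => rw [show m = (Finset.range m).card from (Finset.card_range m).symm]
  apply Finset.card_bij' (fun a _ => a / d) (fun k _ => c + k * d)
  · intro a ha
    simp only [Finset.mem_filter, Finset.mem_range] at ha ⊢
    exact (Nat.div_lt_iff_lt_mul hd).mpr ha.1
  · intro k hk
    simp only [Finset.mem_filter, Finset.mem_range] at hk ⊢
    constructor
    · have h1 : c + k * d < (k + 1) * d := by
        have : (k + 1) * d = k * d + d := by ring
        omega
      have h2 : (k + 1) * d ≤ m * d := Nat.mul_le_mul_right d (by omega)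
      omega
    · rw [show c + k * d + i = (c + i) + k * d by ring, Nat.add_mul_mod_self_right, hci]
  · intro a ha
    simp only [Finset.mem_filter, Finset.mem_range] at ha
    have hac : a % d = c % d := by
      have : a + i ≡ c + i [MOD d] := by
        unfold Nat.ModEq; rw [ha.2, hci]
      exact Nat.ModEq.add_right_cancel' i this
    rw [Nat.mod_eq_of_lt hcd] at hac
    rw [← hac, Nat.mod_add_div' a d]
  · intro k hk
    rw [Nat.add_mul_div_right _ _ hd, Nat.div_eq_of_lt hcd, Nat.zero_add]

/-- Two numbers in `[1, n]` congruent mod `n` are equal. -/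
lemma mod_inj_Icc (n a b : ℕ) (ha1 : 1 ≤ a) (ha2 : a ≤ n) (hb1 : 1 ≤ b) (hb2 : b ≤ n)
    (h : a % n = b % n) : a = b := by
  rcases Nat.lt_or_ge a n with h1 | h1
  · rw [Nat.mod_eq_of_lt h1] at h
    rcases Nat.lt_or_ge b n with h2 | h2
    · rw [Nat.mod_eq_of_lt h2] at h; exact h
    · have hbn : b = n := le_antisymm hb2 h2
      rw [hbn, Nat.mod_self] at h; omega
  · have han : a = n := le_antisymm ha2 h1
    rw [han, Nat.mod_self] at h
    rcases Nat.lt_or_ge b n with h2 | h2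
    · rw [Nat.mod_eq_of_lt h2] at h; omega
    · omega

lemma cast_eq_iff (n : ℕ) [NeZero n] (m : ℕ) (v : ZMod n) :
    ((m : ℕ) : ZMod n) = v ↔ m % n = v.val := by
  have hv : ((v.val : ℕ) : ZMod n) = v := ZMod.natCast_rightInverse v
  constructor
  · intro h
    have : (m : ZMod n) = ((v.val : ℕ) : ZMod n) := by rw [h, hv]
    have h2 := (ZMod.natCast_eq_natCast_iff _ _ _).mp this
    unfold Nat.ModEq at h2
    rw [h2, Nat.mod_eq_of_lt (ZMod.val_lt v)]
  · intro h
    rw [← hv]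
    apply (ZMod.natCast_eq_natCast_iff _ _ _).mpr
    unfold Nat.ModEq
    rw [h, Nat.mod_eq_of_lt (ZMod.val_lt v)]

lemma jv_spec (n : ℕ) (hn : 0 < n) [NeZero n] (v : ZMod n) (a : ℕ) :
    ((v.val + n - 1 - a % n) % n + 1 + a) % n = v.val := by
  set j : ℕ := (v.val + n - 1 - a % n) % n + 1 with hj
  have han : a % n < n := Nat.mod_lt _ hn
  have hq : n * (a / n) + a % n = a := Nat.div_add_mod a n
  have hvlt : v.val < n := ZMod.val_lt v
  have step1 : (j + a) % n = (j + a % n) % n := by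
    conv_lhs => rw [← hq]
    rw [show j + (n * (a / n) + a % n) = (j + a % n) + (a / n) * n by ring,
      Nat.add_mul_mod_self_right]
  have step2 : (j + a % n) % n = v.val := by
    have h1 : j + a % n = (v.val + n - 1 - a % n) % n + (1 + a % n) := by rw [hj]; ring
    rw [h1, Nat.mod_add_mod, show v.val + n - 1 - a % n + (1 + a % n) = v.val + n by omega,
      Nat.add_mod_right, Nat.mod_eq_of_lt hvlt]
  rw [step1, step2]

/-- With `u_j = x_j x_{j+1} ⋯ x_{j+t-1}` (indices mod `n`) and
`m_i = ∏_{j ≡ i (mod d), 1 ≤ j ≤ n} u_j` where `d = gcd(n,t)`, one has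
`m_i = (x_1 ⋯ x_n)^{t/d}` for every residue class `i`. -/
theorem path_monomial_products_eq (K : Type*) [Field K] (n t : ℕ)
    (hn : 0 < n) (ht : 0 < t) (i : ℕ) :
    (∏ j ∈ (Finset.Icc 1 n).filter
        (fun j => j % Nat.gcd n t = i % Nat.gcd n t),
      ∏ a ∈ Finset.range t, (X ((j + a : ℕ) : ZMod n) : MvPolynomial (ZMod n) K))
    = (∏ j ∈ Finset.range n, (X ((j + 1 : ℕ) : ZMod n) : MvPolynomial (ZMod n) K))
        ^ (t / Nat.gcd n t) := by
  haveI : NeZero n := ⟨hn.ne'⟩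
  set d := Nat.gcd n t with hd
  have hd0 : 0 < d := Nat.gcd_pos_of_pos_left _ hn
  have hdn : d ∣ n := Nat.gcd_dvd_left n t
  have hdt : d ∣ t := Nat.gcd_dvd_right n t
  set J : Finset ℕ := (Finset.Icc 1 n).filter (fun j => j % d = i % d) with hJ
  -- the fiber count
  have key : ∀ v : ZMod n,
      (((J ×ˢ Finset.range t)).filter
        (fun p : ℕ × ℕ => ((p.1 + p.2 : ℕ) : ZMod n) = v)).card = t / d := by
    intro v
    have hTc : ((Finset.range t).filter (fun a => (a + i) % d = v.val % d)).card = t / d := by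
      have ht' : t = (t / d) * d := (Nat.div_mul_cancel hdt).symm
      rw [show Finset.range t = Finset.range ((t / d) * d) from by rw [← ht']]
      exact countA d i v.val hd0 (t / d)
    rw [← hTc]
    apply Finset.card_bij' (fun p _ => p.2)
      (fun a _ => (((v.val + n - 1 - a % n) % n) + 1, a))
    · intro p hp
      simp only [Finset.mem_filter, Finset.mem_product, hJ, Finset.mem_Icc,
        Finset.mem_range] at hp ⊢
      obtain ⟨⟨⟨⟨hp1, hp2⟩, hpj⟩, hpa⟩, hpv⟩ := hp
      refine ⟨hpa, ?_⟩
      have hmod : (p.1 + p.2) % n = v.val := (cast_eq_iff n _ v).mp hpv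
      have h1 : p.1 + p.2 ≡ v.val [MOD d] :=
        Nat.ModEq.of_dvd hdn (by unfold Nat.ModEq; rw [hmod, Nat.mod_eq_of_lt (ZMod.val_lt v)])
      have h2 : i + p.2 ≡ v.val [MOD d] := by
        calc i + p.2 ≡ p.1 + p.2 [MOD d] := Nat.ModEq.add_right _ (hpj.symm)
          _ ≡ v.val [MOD d] := h1
      have := h2
      unfold Nat.ModEq at this
      rw [← this]; ring_nf
    · intro a ha
      simp only [Finset.mem_filter, Finset.mem_range] at ha
      obtain ⟨hat, hav⟩ := ha
      set j : ℕ := ((v.val + n - 1 - a % n) % n) + 1 with hj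
      have hjle : j ≤ n := by
        have : (v.val + n - 1 - a % n) % n < n := Nat.mod_lt _ hn
        omega
      have hja : (j + a) % n = v.val := by rw [hj]; exact jv_spec n hn v a
      simp only [Finset.mem_filter, Finset.mem_product, hJ, Finset.mem_Icc, Finset.mem_range]
      refine ⟨⟨⟨⟨by omega, hjle⟩, ?_⟩, hat⟩, (cast_eq_iff n _ v).mpr hja⟩
      -- j % d = i % d
      have h1 : j + a ≡ v.val [MOD d] :=
        Nat.ModEq.of_dvd hdn
          (by unfold Nat.ModEq; rw [hja, Nat.mod_eq_of_lt (ZMod.val_lt v)])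
      have h2 : a + i ≡ v.val [MOD d] := hav
      have h3 : j + a ≡ i + a [MOD d] := by
        calc j + a ≡ v.val [MOD d] := h1
          _ ≡ a + i [MOD d] := h2.symm
          _ = i + a := by ring
      exact Nat.ModEq.add_right_cancel' a h3
    · intro p hp
      simp only [Finset.mem_filter, Finset.mem_product, hJ, Finset.mem_Icc] at hp
      obtain ⟨⟨⟨⟨hp1, hp2⟩, hpj⟩, hpa⟩, hpv⟩ := hp
      have hmod : (p.1 + p.2) % n = v.val := (cast_eq_iff n _ v).mp hpv
      set j : ℕ := ((v.val + n - 1 - p.2 % n) % n) + 1 with hj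
      have hjle : j ≤ n := by
        have : (v.val + n - 1 - p.2 % n) % n < n := Nat.mod_lt _ hn
        omega
      have hja : (j + p.2) % n = v.val := by rw [hj]; exact jv_spec n hn v p.2
      have hjj : j % n = p.1 % n := by
        have : (j + p.2) % n = (p.1 + p.2) % n := by rw [hja, hmod]
        have h4 : j + p.2 ≡ p.1 + p.2 [MOD n] := this
        exact Nat.ModEq.add_right_cancel' p.2 h4
      have : j = p.1 := mod_inj_Icc n j p.1 (by omega) hjle hp1 hp2 hjj
      simp only [hj] at this ⊢
      exact Prod.ext this rfl
    · intro a _; rfl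
  -- reduce both sides to products over ZMod n
  have hLHS : (∏ j ∈ J,
      ∏ a ∈ Finset.range t, (X ((j + a : ℕ) : ZMod n) : MvPolynomial (ZMod n) K))
      = ∏ v : ZMod n, (X v : MvPolynomial (ZMod n) K) ^ (t / d) := by
    rw [← Finset.prod_product']
    rw [Finset.prod_comp (fun v => (X v : MvPolynomial (ZMod n) K))
      (fun p : ℕ × ℕ => ((p.1 + p.2 : ℕ) : ZMod n))]
    rw [Finset.prod_subset (Finset.subset_univ _)]
    · apply Finset.prod_congr rfl
      intro v _
      rw [key v]
    · intro b _ hb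
      have : ((J ×ˢ Finset.range t).filter
          (fun p : ℕ × ℕ => ((p.1 + p.2 : ℕ) : ZMod n) = b)).card = 0 := by
        rw [Finset.card_eq_zero, Finset.filter_eq_empty_iff]
        intro p hp hpv
        exact hb (Finset.mem_image.mpr ⟨p, hp, hpv⟩)
      rw [this, pow_zero]
  have hRHS : (∏ j ∈ Finset.range n, (X ((j + 1 : ℕ) : ZMod n) : MvPolynomial (ZMod n) K))
      = ∏ v : ZMod n, (X v : MvPolynomial (ZMod n) K) := by
    apply Finset.prod_bij (fun j _ => ((j + 1 : ℕ) : ZMod n))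
    · intro a _; exact Finset.mem_univ _
    · intro a1 h1 a2 h2 heq
      simp only [Finset.mem_range] at h1 h2
      have e1 : (a1 + 1) % n = (((a1 + 1 : ℕ) : ZMod n)).val := by
        exact (cast_eq_iff n _ _).mp rfl
      have e2 : (a2 + 1) % n = (((a2 + 1 : ℕ) : ZMod n)).val := by
        exact (cast_eq_iff n _ _).mp rfl
      have : (a1 + 1) % n = (a2 + 1) % n := by rw [e1, e2, heq]
      have := mod_inj_Icc n (a1 + 1) (a2 + 1) (by omega) (by omega) (by omega) (by omega) this
      omega
    · intro v _
      refine ⟨(v.val + n - 1) % n, Finset.mem_range.mpr (Nat.mod_lt _ hn), ?_⟩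
      apply (cast_eq_iff n _ v).mpr
      have hvlt : v.val < n := ZMod.val_lt v
      have h1 : ((v.val + n - 1) % n + 1) % n = (v.val + n - 1 + 1) % n := by
        rw [Nat.mod_add_mod]
      rw [h1, show v.val + n - 1 + 1 = v.val + n by omega, Nat.add_mod_right,
        Nat.mod_eq_of_lt hvlt]
    · intro a _; rfl
  rw [hLHS, hRHS, ← Finset.prod_pow]
end

section
/- Let R = K[y_1,…,y_n] with d | n, d ≥ 2, m_i = ∏_{j ≡ i (mod d)} y_j, and H' = (m_1 - m_d, …, m_{d-1} - m_d). Then R/H' is an integral domain; equivalently, H' is a prime ideal. -/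
open MvPolynomial

namespace FiberRelAux

variable (n d : ℕ)

/-- the class of variables with residue `i`. -/
def cl (i : ℕ) : Finset (Fin n) :=
  Finset.univ.filter (fun k => (k.val + 1) % d = i % d)

/-- representatives: the first `d-1` variables. -/
def reps : Finset (Fin n) := Finset.univ.filter (fun j => j.val + 1 < d)

lemma mem_cl {i : ℕ} {k : Fin n} : k ∈ cl n d i ↔ (k.val + 1) % d = i % d := by
  simp [cl]

lemma mem_reps {j : Fin n} : j ∈ reps n d ↔ j.val + 1 < d := by simp [reps]

/-- the linear projection whose kernel (on differences of exponent vectors)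
is the lattice of relations. -/
def psi : (Fin n → ℤ) →+ (Fin n → ℤ) where
  toFun w k :=
    if k.val + 1 < d then 0
    else if (k.val + 1) % d = 0 then w k + ∑ j ∈ reps n d, w j
    else w k - w ⟨(k.val + 1) % d - 1, by
      have h1 := Nat.mod_le (k.val + 1) d
      have h2 := k.isLt
      omega⟩
  map_zero' := by
    funext k
    simp
  map_add' := by
    intro w w'
    funext k
    simp only [Pi.add_apply]
    split_ifs with h1 h2
    · simp
    · rw [Finset.sum_add_distrib]; ring
    · ring

lemma psi_apply₁ (w : Fin n → ℤ) (k : Fin n) (h1 : k.val + 1 < d) :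
    psi n d w k = 0 := by
  show (if k.val + 1 < d then _ else _) = 0
  rw [if_pos h1]

lemma psi_apply₂ (w : Fin n → ℤ) (k : Fin n) (h1 : ¬ k.val + 1 < d)
    (h2 : (k.val + 1) % d = 0) :
    psi n d w k = w k + ∑ j ∈ reps n d, w j := by
  show (if k.val + 1 < d then _ else _) = _
  rw [if_neg h1, if_pos h2]

lemma psi_apply₃ (w : Fin n → ℤ) (k : Fin n) (h1 : ¬ k.val + 1 < d)
    (h2 : ¬ (k.val + 1) % d = 0) (j' : Fin n) (hj' : j'.val = (k.val + 1) % d - 1) :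
    psi n d w k = w k - w j' := by
  show (if k.val + 1 < d then _ else _) = _
  rw [if_neg h1, if_neg h2]
  congr 2
  exact Fin.ext hj'.symm

def ind (s : Finset (Fin n)) : Fin n → ℤ := fun k => if k ∈ s then 1 else 0

lemma sum_reps_ind (hd : 2 ≤ d) {i : ℕ} (h1 : 1 ≤ i) (h2 : i ≤ d - 1) (hin : i - 1 < n) :
    ∑ j ∈ reps n d, ind n (cl n d i) j = 1 := by
  have hid : i % d = i := Nat.mod_eq_of_lt (by omega)
  have hsingle : reps n d ∩ cl n d i = {⟨i - 1, hin⟩} := by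
    ext j
    simp only [Finset.mem_inter, mem_reps, mem_cl, Finset.mem_singleton]
    constructor
    · rintro ⟨hj1, hj2⟩
      have hmod : (j.val + 1) % d = j.val + 1 := Nat.mod_eq_of_lt hj1
      exact Fin.ext (show j.val = i - 1 by omega)
    · rintro rfl
      have hv : (i - 1 : ℕ) + 1 = i := by omega
      constructor
      · simp only [hv]; omega
      · simp only [hv, hid]
  rw [show (∑ j ∈ reps n d, ind n (cl n d i) j)
      = ∑ j ∈ reps n d, (if j ∈ cl n d i then (1:ℤ) else 0) from rfl,
    Finset.sum_ite_mem, hsingle, Finset.sum_singleton]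

lemma sum_reps_ind_d (hd : 2 ≤ d) :
    ∑ j ∈ reps n d, ind n (cl n d d) j = 0 := by
  apply Finset.sum_eq_zero
  intro j hj
  rw [mem_reps] at hj
  have : ¬ j ∈ cl n d d := by
    rw [mem_cl, Nat.mod_self, Nat.mod_eq_of_lt hj]
    omega
  simp [ind, this]

lemma psi_ind_cl (hd : 2 ≤ d) {i : ℕ} (h1 : 1 ≤ i) (h2 : i ≤ d - 1) :
    psi n d (ind n (cl n d i)) = psi n d (ind n (cl n d d)) := by
  have hid : i % d = i := Nat.mod_eq_of_lt (by omega)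
  funext k
  by_cases hk1 : k.val + 1 < d
  · rw [psi_apply₁ n d _ k hk1, psi_apply₁ n d _ k hk1]
  · by_cases hk2 : (k.val + 1) % d = 0
    · rw [psi_apply₂ n d _ k hk1 hk2, psi_apply₂ n d _ k hk1 hk2]
      have hin : i - 1 < n := by
        have := k.isLt; omega
      rw [sum_reps_ind n d hd h1 h2 hin, sum_reps_ind_d n d hd]
      have hkA : ¬ k ∈ cl n d i := by
        rw [mem_cl, hk2, hid]; omega
      have hkB : k ∈ cl n d d := by
        rw [mem_cl, hk2, Nat.mod_self]
      simp [ind, hkA, hkB]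
    · have hrlt : (k.val + 1) % d < d := Nat.mod_lt _ (by omega)
      have hin : (k.val + 1) % d - 1 < n := by
        have h1 := Nat.mod_le (k.val + 1) d
        have h2 := k.isLt
        omega
      set j' : Fin n := ⟨(k.val + 1) % d - 1, hin⟩ with hj'
      have hj'v : j'.val = (k.val + 1) % d - 1 := rfl
      rw [psi_apply₃ n d _ k hk1 hk2 j' hj'v, psi_apply₃ n d _ k hk1 hk2 j' hj'v]
      have hj'mod : (j'.val + 1) % d = (k.val + 1) % d := by
        rw [hj'v]
        have : (k.val + 1) % d - 1 + 1 = (k.val + 1) % d := by omega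
        rw [this, Nat.mod_eq_of_lt hrlt]
      -- membership equivalences
      have e1 : (k ∈ cl n d i) ↔ (j' ∈ cl n d i) := by
        rw [mem_cl, mem_cl, hj'mod]
      have e2 : (k ∈ cl n d d) ↔ (j' ∈ cl n d d) := by
        rw [mem_cl, mem_cl, hj'mod]
      simp only [ind]
      by_cases hA : k ∈ cl n d i <;> by_cases hB : k ∈ cl n d d <;>
        simp [hA, hB, e1.symm, e2.symm, ← e1, ← e2]


/-- exponent vector of a squarefree monomial supported on `s`. -/
noncomputable def Uf (s : Finset (Fin n)) : Fin n →₀ ℕ := ∑ k ∈ s, Finsupp.single k 1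

lemma Uf_apply (s : Finset (Fin n)) (j : Fin n) :
    Uf n s j = if j ∈ s then 1 else 0 := by
  classical
  rw [Uf, Finset.sum_apply']
  rw [show (∑ k ∈ s, Finsupp.single k 1 j) = ∑ k ∈ s, if k = j then 1 else 0 by
    apply Finset.sum_congr rfl; intro k _; rw [Finsupp.single_apply]]
  rw [Finset.sum_ite_eq' s j (fun _ => 1)]

lemma cast_Uf (s : Finset (Fin n)) : (fun k => ((Uf n s k : ℕ) : ℤ)) = ind n s := by
  funext k
  rw [Uf_apply, ind]
  split_ifs <;> simp

/-- the span of the binomial relations, with monomial generators. -/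
noncomputable def SP (K : Type*) [Field K] : Ideal (MvPolynomial (Fin n) K) :=
  Ideal.span ((fun i => monomial (Uf n (cl n d i)) (1:K)
    - monomial (Uf n (cl n d d)) 1) '' Set.Icc 1 (d - 1))

variable {K : Type*} [Field K]

lemma step (hd : 2 ≤ d) (u v : Fin n →₀ ℕ)
    (hpsi : psi n d (fun k => (u k : ℤ) - v k) = 0)
    (j₀ : Fin n) (hj₀ : j₀.val + 1 < d) (hlt : v j₀ < u j₀) :
    ∃ u' : Fin n →₀ ℕ,
      monomial u (1:K) - monomial u' 1 ∈ SP n d K ∧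
      psi n d (fun k => (u' k : ℤ) - v k) = 0 ∧
      (∀ j, j.val + 1 < d → j ≠ j₀ → u' j = u j) ∧ u' j₀ + 1 = u j₀ := by
  classical
  set i := j₀.val + 1 with hi
  have hi1 : 1 ≤ i := by omega
  have hi2 : i ≤ d - 1 := by omega
  have hid : i % d = i := Nat.mod_eq_of_lt (by omega)
  set A := cl n d i with hA
  set B := cl n d d with hB
  have hj₀A : j₀ ∈ A := by rw [hA, mem_cl, hid]
  have hj₀B : ¬ j₀ ∈ B := by
    rw [hB, mem_cl, Nat.mod_self, Nat.mod_eq_of_lt hj₀]; omega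
  -- every element of A has u-coordinate bigger than v-coordinate
  have hApos : ∀ j ∈ A, v j < u j := by
    intro j hj
    rw [hA, mem_cl, hid] at hj
    by_cases hjr : j.val + 1 < d
    · have : j = j₀ := by
        apply Fin.ext
        have : (j.val + 1) % d = j.val + 1 := Nat.mod_eq_of_lt hjr
        omega
      rw [this]; exact hlt
    · have hk := congrFun hpsi j
      have hne : ¬ (j.val + 1) % d = 0 := by omega
      rw [psi_apply₃ n d _ j hjr hne j₀ (by omega)] at hk
      simp only [Pi.zero_apply] at hk
      omega
  -- A-membership for representatives is only j₀ ; reps avoid B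
  have hrepA : ∀ j : Fin n, j.val + 1 < d → j ∈ A → j = j₀ := by
    intro j hjr hj
    rw [hA, mem_cl, hid] at hj
    have : (j.val + 1) % d = j.val + 1 := Nat.mod_eq_of_lt hjr
    exact Fin.ext (by omega)
  have hrepB : ∀ j : Fin n, j.val + 1 < d → ¬ j ∈ B := by
    intro j hjr
    rw [hB, mem_cl, Nat.mod_self, Nat.mod_eq_of_lt hjr]; omega
  have hle : Uf n A ≤ u := by
    intro j
    rw [Uf_apply]
    split_ifs with h
    · have := hApos j h; omega
    · exact Nat.zero_le _
  refine ⟨u - Uf n A + Uf n B, ?_, ?_, ?_, ?_⟩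
  · -- membership in SP
    have hfac : monomial u (1:K) - monomial (u - Uf n A + Uf n B) 1
        = monomial (u - Uf n A) 1 * (monomial (Uf n A) 1 - monomial (Uf n B) 1) := by
      rw [mul_sub, monomial_mul, monomial_mul, mul_one, tsub_add_cancel_of_le hle]
    rw [hfac]
    exact Ideal.mul_mem_left _ _ (Ideal.subset_span ⟨i, ⟨hi1, hi2⟩, rfl⟩)
  · -- psi vanishes
    have hco : ∀ j : Fin n, (((u - Uf n A + Uf n B) j : ℕ) : ℤ)
        = (u j : ℤ) - ind n A j + ind n B j := by
      intro j
      have h1 : Uf n A j ≤ u j := hle j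
      rw [Finsupp.add_apply, Finsupp.tsub_apply]
      rw [Uf_apply, Uf_apply] at *
      simp only [ind]
      split_ifs at h1 ⊢ <;> push_cast <;> omega
    have hfun : (fun k => (((u - Uf n A + Uf n B) k : ℕ) : ℤ) - v k)
        = (fun k => (u k : ℤ) - v k) + (ind n B - ind n A) := by
      funext k
      simp only [Pi.add_apply, Pi.sub_apply, hco k]
      ring
    rw [hfun, map_add, hpsi, map_sub, hA, hB, psi_ind_cl n d hd hi1 hi2]
    simp
  · intro j hjr hjne
    have hjA : ¬ j ∈ A := fun h => hjne (hrepA j hjr h)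
    have hjB : ¬ j ∈ B := hrepB j hjr
    rw [Finsupp.add_apply, Finsupp.tsub_apply, Uf_apply, Uf_apply, if_neg hjA, if_neg hjB]
    omega
  · have h1 : v j₀ < u j₀ := hApos j₀ hj₀A
    rw [Finsupp.add_apply, Finsupp.tsub_apply, Uf_apply, Uf_apply, if_pos hj₀A, if_neg hj₀B]
    omega


lemma natAbs_cast_sub (a b : ℕ) : ((a : ℤ) - b).natAbs = a - b + (b - a) := by omega

lemma key (hd : 2 ≤ d) (N : ℕ) : ∀ (u v : Fin n →₀ ℕ),
    (∑ j ∈ reps n d, ((u j : ℤ) - v j).natAbs) = N →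
    psi n d (fun k => (u k : ℤ) - v k) = 0 →
    monomial u (1:K) - monomial v 1 ∈ SP n d K := by
  induction N using Nat.strong_induction_on with
  | _ N IH =>
  intro u v hmu hpsi
  by_cases hbase : ∀ j ∈ reps n d, u j = v j
  · have huv : u = v := by
      ext k
      by_cases hk1 : k.val + 1 < d
      · exact hbase k (mem_reps n d |>.mpr hk1)
      · have hk := congrFun hpsi k
        simp only [Pi.zero_apply] at hk
        by_cases hk2 : (k.val + 1) % d = 0
        · rw [psi_apply₂ n d _ k hk1 hk2] at hk
          have hs : ∑ j ∈ reps n d, ((u j : ℤ) - v j) = 0 :=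
            Finset.sum_eq_zero (fun j hj => by rw [hbase j hj]; ring)
          omega
        · have hrlt : (k.val + 1) % d < d := Nat.mod_lt _ (by omega)
          have hin : (k.val + 1) % d - 1 < n := by
            have h1 := Nat.mod_le (k.val + 1) d
            have h2 := k.isLt
            omega
          set j' : Fin n := ⟨(k.val + 1) % d - 1, hin⟩ with hj'
          rw [psi_apply₃ n d _ k hk1 hk2 j' rfl] at hk
          have hj'rep : j' ∈ reps n d := by
            rw [mem_reps]
            show (k.val + 1) % d - 1 + 1 < d
            omega
          have := hbase j' hj'rep
          omega
    rw [huv, sub_self]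
    exact Ideal.zero_mem _
  · push_neg at hbase
    obtain ⟨j₀, hj₀reps, hj₀ne⟩ := hbase
    rw [mem_reps] at hj₀reps
    rcases Nat.lt_or_ge (v j₀) (u j₀) with hlt | hge
    · obtain ⟨u', hmem, hpsi', hsame, hj₀'⟩ :=
        step n d (K := K) hd u v hpsi j₀ hj₀reps hlt
      have hlt' : (∑ j ∈ reps n d, ((u' j : ℤ) - v j).natAbs) < N := by
        rw [← hmu]
        apply Finset.sum_lt_sum
        · intro j hj
          rw [mem_reps] at hj
          by_cases hje : j = j₀
          · subst hje
            rw [natAbs_cast_sub, natAbs_cast_sub]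
            omega
          · rw [hsame j hj hje]
        · refine ⟨j₀, mem_reps n d |>.mpr hj₀reps, ?_⟩
          rw [natAbs_cast_sub, natAbs_cast_sub]
          omega
      have hrec := IH _ hlt' u' v rfl hpsi'
      have : monomial u (1:K) - monomial v 1
          = (monomial u 1 - monomial u' 1) + (monomial u' 1 - monomial v 1) := by ring
      rw [this]
      exact Ideal.add_mem _ hmem hrec
    · have hlt : u j₀ < v j₀ := by omega
      have hpsi2 : psi n d (fun k => (v k : ℤ) - u k) = 0 := by
        have : (fun k => (v k : ℤ) - u k) = -(fun k => (u k : ℤ) - v k) := by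
          funext k; simp
        rw [this, map_neg, hpsi, neg_zero]
      obtain ⟨v', hmem, hpsi', hsame, hj₀'⟩ :=
        step n d (K := K) hd v u hpsi2 j₀ hj₀reps hlt
      have hpsi'' : psi n d (fun k => (u k : ℤ) - v' k) = 0 := by
        have : (fun k => (u k : ℤ) - v' k) = -(fun k => (v' k : ℤ) - u k) := by
          funext k; simp
        rw [this, map_neg, hpsi', neg_zero]
      have hlt' : (∑ j ∈ reps n d, ((u j : ℤ) - v' j).natAbs) < N := by
        rw [← hmu]
        apply Finset.sum_lt_sum
        · intro j hj
          rw [mem_reps] at hj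
          by_cases hje : j = j₀
          · subst hje
            rw [natAbs_cast_sub, natAbs_cast_sub]
            omega
          · rw [hsame j hj hje]
        · refine ⟨j₀, mem_reps n d |>.mpr hj₀reps, ?_⟩
          rw [natAbs_cast_sub, natAbs_cast_sub]
          omega
      have hrec := IH _ hlt' u v' rfl hpsi''
      have : monomial u (1:K) - monomial v 1
          = (monomial u 1 - monomial v' 1) - (monomial v 1 - monomial v' 1) := by ring
      rw [this]
      exact Ideal.sub_mem _ hrec hmem


def delta (j : Fin n) : Fin n → ℤ := fun k => if k = j then 1 else 0

variable (K) in
noncomputable def Phi : MvPolynomial (Fin n) K →ₐ[K] AddMonoidAlgebra K (Fin n → ℤ) :=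
  aeval (fun j => AddMonoidAlgebra.single (psi n d (delta n j)) 1)

lemma cast_eq_sum_delta (u : Fin n →₀ ℕ) :
    (fun k => (u k : ℤ)) = ∑ j ∈ u.support, u j • delta n j := by
  classical
  funext k
  rw [Finset.sum_apply]
  calc (u k : ℤ) = if k ∈ u.support then (u k : ℤ) else 0 := by
        split_ifs with h
        · rfl
        · rw [Finsupp.notMem_support_iff.mp h]; rfl
    _ = ∑ j ∈ u.support, (if k = j then (u j : ℤ) else 0) :=
        (Finset.sum_ite_eq u.support k (fun j => (u j : ℤ))).symm
    _ = ∑ j ∈ u.support, (u j • delta n j) k := by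
        apply Finset.sum_congr rfl
        intro j _
        simp only [Pi.smul_apply, delta]
        split_ifs <;> simp

lemma Phi_monomial (u : Fin n →₀ ℕ) (c : K) :
    Phi n d K (monomial u c)
      = AddMonoidAlgebra.single (psi n d (fun k => (u k : ℤ))) c := by
  rw [Phi, aeval_monomial, Finsupp.prod]
  simp_rw [AddMonoidAlgebra.single_pow, one_pow]
  rw [AddMonoidAlgebra.prod_single, Finset.prod_const_one]
  have hS : ∑ j ∈ u.support, u j • psi n d (delta n j)
      = psi n d (fun k => (u k : ℤ)) := by
    rw [cast_eq_sum_delta, map_sum]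
    apply Finset.sum_congr rfl
    intro j _
    rw [map_nsmul]
  rw [hS,
    show (algebraMap K (AddMonoidAlgebra K (Fin n → ℤ))) c
      = AddMonoidAlgebra.single 0 c from rfl,
    AddMonoidAlgebra.single_mul_single, zero_add, mul_one]

lemma SP_le_ker (hd : 2 ≤ d) : SP n d K ≤ RingHom.ker (Phi n d K) := by
  rw [SP, Ideal.span_le]
  rintro x ⟨i, hi, rfl⟩
  simp only [Set.mem_Icc] at hi
  rw [SetLike.mem_coe, RingHom.mem_ker]
  show Phi n d K (monomial (Uf n (cl n d i)) 1 - monomial (Uf n (cl n d d)) 1) = 0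
  rw [map_sub, Phi_monomial, Phi_monomial, cast_Uf, cast_Uf,
    psi_ind_cl n d hd hi.1 hi.2, sub_self]

lemma ker_le_SP (hd : 2 ≤ d) : RingHom.ker (Phi n d K) ≤ SP n d K := by
  intro f hf
  rw [RingHom.mem_ker] at hf
  classical
  set s := f.support with hs
  set pf : (Fin n →₀ ℕ) → (Fin n → ℤ) := fun w => psi n d (fun k => (w k : ℤ)) with hpf
  set τ : (Fin n → ℤ) → (Fin n →₀ ℕ) :=
    fun g => if h : ∃ a ∈ s, pf a = g then h.choose else 0 with hτ
  have hτspec : ∀ g : Fin n → ℤ, (∃ a ∈ s, pf a = g) → τ g ∈ s ∧ pf (τ g) = g := by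
    intro g h
    rw [hτ]
    simp only [dif_pos h]
    exact h.choose_spec
  have hcoef : ∀ g : Fin n → ℤ, ∑ w ∈ s.filter (fun w => pf w = g), coeff w f = 0 := by
    intro g
    have h0 : Phi n d K f = ∑ w ∈ s, AddMonoidAlgebra.single (pf w) (coeff w f) := by
      conv_lhs => rw [f.as_sum]
      rw [map_sum]
      apply Finset.sum_congr rfl
      intro w _
      rw [Phi_monomial]
    have h1 := congrArg (fun x : AddMonoidAlgebra K (Fin n → ℤ) => x.coeff g) (h0.symm.trans hf)
    simp only [AddMonoidAlgebra.coeff_zero, AddMonoidAlgebra.coeff_sum,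
      AddMonoidAlgebra.coeff_single, Finsupp.coe_zero, Pi.zero_apply] at h1
    rw [Finset.sum_apply'] at h1
    simp only [Finsupp.single_apply] at h1
    rw [Finset.sum_filter]
    exact h1
  have hsplit : ∑ w ∈ s, monomial (τ (pf w)) (coeff w f) = 0 := by
    rw [← Finset.sum_fiberwise_of_maps_to (g := pf) (t := s.image pf)
      (fun w hw => Finset.mem_image_of_mem _ hw)
      (fun w => monomial (τ (pf w)) (coeff w f))]
    apply Finset.sum_eq_zero
    intro g hg
    rw [Finset.sum_congr rfl (fun w hw => by rw [(Finset.mem_filter.mp hw).2])]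
    rw [← map_sum, hcoef g, map_zero]
  have hf2 : f = ∑ w ∈ s, (monomial w (coeff w f) - monomial (τ (pf w)) (coeff w f)) := by
    rw [Finset.sum_sub_distrib, hsplit, sub_zero]
    exact f.as_sum
  rw [hf2]
  apply Ideal.sum_mem
  intro w hw
  have hex : ∃ a ∈ s, pf a = pf w := ⟨w, hw, rfl⟩
  obtain ⟨hτs, hτpsi⟩ := hτspec _ hex
  have h0 : psi n d (fun k => (w k : ℤ) - (τ (pf w)) k) = 0 := by
    have heq : (fun k => (w k : ℤ) - (τ (pf w)) k)
        = (fun k => ((w k : ℕ) : ℤ)) - (fun k => (((τ (pf w)) k : ℕ) : ℤ)) := rfl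
    rw [heq, map_sub]
    rw [show psi n d (fun k => ((w k : ℕ) : ℤ)) = pf w from rfl,
      show psi n d (fun k => (((τ (pf w)) k : ℕ) : ℤ)) = pf (τ (pf w)) from rfl,
      hτpsi, sub_self]
  have hkey := key n d (K := K) hd _ w (τ (pf w)) rfl h0
  have hsc : monomial w (coeff w f) - monomial (τ (pf w)) (coeff w f)
      = C (coeff w f) * (monomial w 1 - monomial (τ (pf w)) 1) := by
    rw [mul_sub, C_mul_monomial, C_mul_monomial, mul_one]
  rw [hsc]
  exact Ideal.mul_mem_left _ _ hkey

lemma prod_X_eq (s : Finset (Fin n)) :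
    (∏ j ∈ s, (X j : MvPolynomial (Fin n) K)) = monomial (Uf n s) 1 := by
  classical
  rw [Uf]
  induction s using Finset.induction_on with
  | empty => simp
  | insert _ _ h ih =>
      rw [Finset.prod_insert h, Finset.sum_insert h, ih,
        show (X _ : MvPolynomial (Fin n) K) = monomial (Finsupp.single _ 1) 1 from rfl,
        monomial_mul, one_mul]

end FiberRelAux

/-- With `m_i = ∏_{j ≡ i (mod d)} y_j`, the ideal
`H' = (m_1 - m_d, …, m_{d-1} - m_d)` is a prime ideal; equivalently,
`R/H'` is an integral domain. -/
theorem fiber_relations_isPrime (K : Type*) [Field K] (n d : ℕ)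
    (hd : 2 ≤ d) (hdn : d ∣ n)
    (m : ℕ → MvPolynomial (Fin n) K)
    (hm : ∀ i, m i = ∏ j ∈ Finset.univ.filter
        (fun j : Fin n => (j.val + 1) % d = i % d), X j) :
    (Ideal.span ((fun i => m i - m d) '' Set.Icc 1 (d - 1))).IsPrime := by
  classical
  have hset : ((fun i => m i - m d) '' Set.Icc 1 (d - 1))
      = ((fun i => monomial (FiberRelAux.Uf n (FiberRelAux.cl n d i)) (1:K)
          - monomial (FiberRelAux.Uf n (FiberRelAux.cl n d d)) 1) '' Set.Icc 1 (d - 1)) := by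
    apply Set.image_congr
    intro i _
    rw [hm i, hm d, FiberRelAux.prod_X_eq, FiberRelAux.prod_X_eq]
    rfl
  rw [hset]
  have hEq : FiberRelAux.SP n d K = RingHom.ker (FiberRelAux.Phi n d K) :=
    le_antisymm (FiberRelAux.SP_le_ker n d hd) (FiberRelAux.ker_le_SP n d hd)
  show (FiberRelAux.SP n d K).IsPrime
  rw [hEq]
  haveI : IsDomain (AddMonoidAlgebra K (Fin n → ℤ)) := NoZeroDivisors.to_isDomain _
  exact RingHom.ker_isPrime _
end

section
/- Let T = K[x_0,…,x_{n-1}, y_0,…,y_{n-1}] with indices modulo n, and let L ⊂ T be the ideal generated by f_1, …, f_{n-1}, g_1, where f_j = x_{j-2} y_j - x_j y_{j+1} for j = 1,…,n-1 and g_1 = x_0 y_1 - x_{n-2} y_0. Then for every k with 1 ≤ k ≤ ⌊n/2⌋, the binomial g_k = x_{2k-2} · ∏_{i ∈ [0,2k), i odd} y_i − x_{n-2} · ∏_{i ∈ [0,2k), i even} y_i belongs to L. -/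
open MvPolynomial

/-- In `T = K[x_0,…,x_{n-1},y_0,…,y_{n-1}]` (indices mod `n`), with
`f_j = x_{j-2} y_j - x_j y_{j+1}` for `j = 1,…,n-1` and
`g_1 = x_0 y_1 - x_{n-2} y_0`, every binomial
`g_k = x_{2k-2} ∏_{i ∈ [0,2k), i odd} y_i - x_{n-2} ∏_{i ∈ [0,2k), i even} y_i`
with `1 ≤ k ≤ ⌊n/2⌋` belongs to `L = (f_1,…,f_{n-1},g_1)`. -/
theorem gk_mem_symmetric_ideal (K : Type*) [Field K] (n : ℕ) (hn : 3 ≤ n)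
    (x y : ZMod n → MvPolynomial (ZMod n ⊕ ZMod n) K)
    (hx : ∀ i, x i = X (Sum.inl i)) (hy : ∀ i, y i = X (Sum.inr i))
    (L : Ideal (MvPolynomial (ZMod n ⊕ ZMod n) K))
    (hL : L = Ideal.span
      ({p | ∃ j : ℕ, 1 ≤ j ∧ j ≤ n - 1 ∧
          p = x ((j : ZMod n) - 2) * y (j : ZMod n)
            - x (j : ZMod n) * y ((j : ZMod n) + 1)} ∪
        {x 0 * y 1 - x ((n : ZMod n) - 2) * y 0})) :
    ∀ k : ℕ, 1 ≤ k → k ≤ n / 2 →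
      x (((2 * k - 2 : ℕ) : ZMod n))
          * ∏ i ∈ (Finset.range (2 * k)).filter (fun i => Odd i), y (i : ZMod n)
        - x ((n : ZMod n) - 2)
          * ∏ i ∈ (Finset.range (2 * k)).filter (fun i => Even i), y (i : ZMod n)
        ∈ L := by

  intro k hk1 hk2
  induction k with
  | zero => omega
  | succ k ih =>
    rcases Nat.lt_or_ge k 1 with h1 | h1
    · interval_cases k
      have e1 : (Finset.range (2*1)).filter (fun i => Odd i) = {1} := by decide
      have e2 : (Finset.range (2*1)).filter (fun i => Even i) = {0} := by decide
      rw [e1, e2, Finset.prod_singleton, Finset.prod_singleton]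
      rw [hL]
      apply Ideal.subset_span
      right
      simp
    · have hg := ih h1 (by omega)
      have hf : x (((2*k : ℕ) : ZMod n) - 2) * y ((2*k : ℕ) : ZMod n)
          - x ((2*k : ℕ) : ZMod n) * y (((2*k : ℕ) : ZMod n) + 1) ∈ L := by
        rw [hL]; apply Ideal.subset_span; left
        exact ⟨2*k, by omega, by omega, rfl⟩
      have hodd : (Finset.range (2*(k+1))).filter (fun i => Odd i)
          = insert (2*k+1) ((Finset.range (2*k)).filter (fun i => Odd i)) := by
        have h2 : 2*(k+1) = (2*k+1)+1 := by ring
        rw [h2, Finset.range_add_one, Finset.filter_insert,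
          if_pos (odd_two_mul_add_one k),
          Finset.range_add_one, Finset.filter_insert, if_neg (by simp)]
      have heven : (Finset.range (2*(k+1))).filter (fun i => Even i)
          = insert (2*k) ((Finset.range (2*k)).filter (fun i => Even i)) := by
        have h2 : 2*(k+1) = (2*k+1)+1 := by ring
        rw [h2, Finset.range_add_one, Finset.filter_insert,
          if_neg (by simp), Finset.range_add_one, Finset.filter_insert,
          if_pos (even_two_mul k)]
      rw [hodd, heven, Finset.prod_insert (by simp), Finset.prod_insert (by simp)]
      have c1 : ((2*(k+1)-2 : ℕ) : ZMod n) = ((2*k : ℕ) : ZMod n) := by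
        exact congrArg _ (by omega)
      have c2 : ((2*k+1 : ℕ) : ZMod n) = ((2*k : ℕ) : ZMod n) + 1 := by
        push_cast; ring
      have c3 : ((2*k-2 : ℕ) : ZMod n) = ((2*k : ℕ) : ZMod n) - 2 := by
        have h2 : (2:ℕ) ≤ 2*k := by omega
        rw [Nat.cast_sub h2]; norm_num
      rw [c1, c2]
      rw [c3] at hg
      have H := L.sub_mem
        (Ideal.mul_mem_left L (y ((2*k : ℕ) : ZMod n)) hg)
        (Ideal.mul_mem_left L
          (∏ i ∈ (Finset.range (2*k)).filter (fun i => Odd i), y (i : ZMod n)) hf)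
      convert H using 1
      ring
end

section
/- Let n ≥ 4 be even, T = K[x_0,…,x_{n-1}, y_0,…,y_{n-1}] with indices modulo n, and L ⊂ T the ideal generated by f_j = x_{n/2 + j} y_j - x_j y_{j+1} for j = 1,…,n-1 and g_1 = x_0 y_1 - x_{n/2} y_0. Then for every k with 1 ≤ k ≤ n/2 − 1, the binomial g_k = y_k · ∏_{i=0}^{k-1} x_i − y_0 · ∏_{i=n/2}^{k-1+n/2} x_i belongs to L. -/
open MvPolynomial

/-- In `T = K[x_0,…,x_{n-1},y_0,…,y_{n-1}]` (indices mod `n`, `n` even), with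
`f_j = x_{n/2+j} y_j - x_j y_{j+1}` for `j = 1,…,n-1` and
`g_1 = x_0 y_1 - x_{n/2} y_0`, every binomial
`g_k = y_k ∏_{i=0}^{k-1} x_i - y_0 ∏_{i=n/2}^{k-1+n/2} x_i`
with `1 ≤ k ≤ n/2 - 1` belongs to `L = (f_1,…,f_{n-1},g_1)`. -/
theorem gk_mem_symmetric_ideal_half_path (K : Type*) [Field K] (n : ℕ)
    (hn : 4 ≤ n) (hev : Even n)
    (x y : ZMod n → MvPolynomial (ZMod n ⊕ ZMod n) K)
    (hx : ∀ i, x i = X (Sum.inl i)) (hy : ∀ i, y i = X (Sum.inr i))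
    (L : Ideal (MvPolynomial (ZMod n ⊕ ZMod n) K))
    (hL : L = Ideal.span
      ({p | ∃ j : ℕ, 1 ≤ j ∧ j ≤ n - 1 ∧
          p = x (((n / 2 + j : ℕ) : ZMod n)) * y (j : ZMod n)
            - x (j : ZMod n) * y ((j : ZMod n) + 1)} ∪
        {x 0 * y 1 - x (((n / 2 : ℕ) : ZMod n)) * y 0})) :
    ∀ k : ℕ, 1 ≤ k → k ≤ n / 2 - 1 →
      y (k : ZMod n) * ∏ i ∈ Finset.range k, x (i : ZMod n)
        - y 0 * ∏ i ∈ Finset.range k, x (((n / 2 + i : ℕ) : ZMod n))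
        ∈ L := by
  subst hL
  intro k hk1 hk2
  induction k with
  | zero => omega
  | succ k ih =>
    rcases Nat.lt_or_ge k 1 with h1 | h1
    · -- base case k = 0, so k+1 = 1
      interval_cases k
      have heq : y (((0 + 1 : ℕ)) : ZMod n) * ∏ i ∈ Finset.range (0 + 1), x (i : ZMod n)
          - y 0 * ∏ i ∈ Finset.range (0 + 1), x (((n / 2 + i : ℕ) : ZMod n))
          = x 0 * y 1 - x (((n / 2 : ℕ) : ZMod n)) * y 0 := by
        norm_num [Finset.prod_range_one]
        push_cast
        ring
      rw [heq]
      exact Ideal.subset_span (Or.inr rfl)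
    · -- inductive step
      have hkle : k ≤ n / 2 - 1 := by omega
      have hg := ih h1 hkle
      have hfmem : x (((n / 2 + k : ℕ) : ZMod n)) * y (k : ZMod n)
          - x (k : ZMod n) * y ((k : ZMod n) + 1)
          ∈ Ideal.span
            ({p | ∃ j : ℕ, 1 ≤ j ∧ j ≤ n - 1 ∧
                p = x (((n / 2 + j : ℕ) : ZMod n)) * y (j : ZMod n)
                  - x (j : ZMod n) * y ((j : ZMod n) + 1)} ∪
              {x 0 * y 1 - x (((n / 2 : ℕ) : ZMod n)) * y 0}) := by
        refine Ideal.subset_span (Or.inl ⟨k, h1, by omega, rfl⟩)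
      have key : y (((k + 1 : ℕ)) : ZMod n) * ∏ i ∈ Finset.range (k + 1), x (i : ZMod n)
          - y 0 * ∏ i ∈ Finset.range (k + 1), x (((n / 2 + i : ℕ) : ZMod n))
          = x (((n / 2 + k : ℕ) : ZMod n)) *
              (y (k : ZMod n) * ∏ i ∈ Finset.range k, x (i : ZMod n)
                - y 0 * ∏ i ∈ Finset.range k, x (((n / 2 + i : ℕ) : ZMod n)))
            - (∏ i ∈ Finset.range k, x (i : ZMod n)) *
              (x (((n / 2 + k : ℕ) : ZMod n)) * y (k : ZMod n)
                - x (k : ZMod n) * y ((k : ZMod n) + 1)) := by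
        rw [Finset.prod_range_succ, Finset.prod_range_succ]
        push_cast
        ring
      rw [key]
      exact Ideal.sub_mem _ (Ideal.mul_mem_left _ _ hg) (Ideal.mul_mem_left _ _ hfmem)
end

section
/- Let n = 2s be even and φ: K[y_1,…,y_n] → K[x_1,…,x_n] the map sending y_j to x_j x_{j+1} ⋯ x_{j+n-3} (the monomial of the (n−2)-path starting at j, indices mod n). Then the binomial h = ∏_{i ∈ [0,n), i odd} y_i − ∏_{i ∈ [0,n), i even} y_i lies in the kernel of φ. -/
open MvPolynomial Finset

private lemma card_odd_range (m : ℕ) :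
    ((Finset.range (2*m)).filter (fun i => Odd i)).card = m := by
  induction m with
  | zero => simp
  | succ m ih =>
    have h2 : 2 * (m+1) = (2*m + 1) + 1 := by ring
    rw [h2, Finset.range_add_one, Finset.filter_insert, Finset.range_add_one,
      Finset.filter_insert]
    have ho : Odd (2*m+1) := ⟨m, by ring⟩
    have he : ¬ Odd (2*m) := by simp [Nat.odd_iff, Nat.mul_mod_right]
    rw [if_pos ho, if_neg he, Finset.card_insert_of_notMem, ih]
    intro h
    have := Finset.mem_range.1 (Finset.mem_filter.1 h).1
    omega

private lemma card_even_range (m : ℕ) :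
    ((Finset.range (2*m)).filter (fun i => Even i)).card = m := by
  induction m with
  | zero => simp
  | succ m ih =>
    have h2 : 2 * (m+1) = (2*m + 1) + 1 := by ring
    rw [h2, Finset.range_add_one, Finset.filter_insert, Finset.range_add_one,
      Finset.filter_insert]
    have ho : ¬ Even (2*m+1) := by simp [Nat.even_iff, Nat.add_mul_mod_self_left]
    have he : Even (2*m) := ⟨m, by ring⟩
    rw [if_neg ho, if_pos he, Finset.card_insert_of_notMem, ih]
    intro h
    have := Finset.mem_range.1 (Finset.mem_filter.1 h).1
    omega

private lemma fiber_card (n : ℕ) (hn : 2 ≤ n) (p : ℕ → Prop) [DecidablePred p]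
    [NeZero n] (v : ZMod n) :
    ((((Finset.range n).filter p) ×ˢ Finset.range (n-2)).filter
        (fun x : ℕ × ℕ => ((x.1 : ZMod n) + (x.2 : ZMod n) = v))).card
      = ((Finset.range n).filter
          (fun i => p i ∧ (i : ZMod n) ≠ v+1 ∧ (i : ZMod n) ≠ v+2)).card := by
  have hc1 : ((n-1 : ℕ) : ZMod n) = -1 := by
    rw [Nat.cast_sub (by omega : 1 ≤ n), ZMod.natCast_self, zero_sub, Nat.cast_one]
  have hc2 : ((n-2 : ℕ) : ZMod n) = -2 := by
    rw [Nat.cast_sub hn, ZMod.natCast_self, zero_sub, Nat.cast_ofNat]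
  symm
  refine Finset.card_bij' (fun i _ => ((i, (v - (i:ZMod n)).val) : ℕ × ℕ))
    (fun x _ => x.1) ?_ ?_ ?_ ?_
  · intro i hi
    simp only [Finset.mem_filter, Finset.mem_range] at hi
    obtain ⟨hilt, hpi, h1, h2⟩ := hi
    simp only [Finset.mem_filter, Finset.mem_product, Finset.mem_range]
    have hval : (((v - (i:ZMod n)).val : ℕ) : ZMod n) = v - (i:ZMod n) :=
      ZMod.natCast_rightInverse _
    refine ⟨⟨⟨hilt, hpi⟩, ?_⟩, by rw [hval]; ring⟩
    have hlt : (v - (i:ZMod n)).val < n := ZMod.val_lt _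
    by_contra hge
    push_neg at hge
    have hcase : (v - (i:ZMod n)).val = n-2 ∨ (v - (i:ZMod n)).val = n-1 := by omega
    rcases hcase with h | h
    · apply h2
      have hv : v - (i:ZMod n) = -2 := by rw [← hval, h, hc2]
      linear_combination -hv
    · apply h1
      have hv : v - (i:ZMod n) = -1 := by rw [← hval, h, hc1]
      linear_combination -hv
  · intro x hx
    simp only [Finset.mem_filter, Finset.mem_product, Finset.mem_range] at hx
    obtain ⟨⟨h1, h2⟩, hsum⟩ := hx
    simp only [Finset.mem_filter, Finset.mem_range] at h1 ⊢
    have hk : ((x.2 : ℕ) : ZMod n) = v - (x.1 : ZMod n) := by linear_combination hsum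
    refine ⟨h1.1, h1.2, ?_, ?_⟩
    · intro h
      have : ((x.2 : ℕ) : ZMod n) = ((n-1 : ℕ) : ZMod n) := by
        rw [hk, h, hc1]; ring
      have := congrArg ZMod.val this
      rw [ZMod.val_cast_of_lt (by omega), ZMod.val_cast_of_lt (by omega)] at this
      omega
    · intro h
      have : ((x.2 : ℕ) : ZMod n) = ((n-2 : ℕ) : ZMod n) := by
        rw [hk, h, hc2]; ring
      have := congrArg ZMod.val this
      rw [ZMod.val_cast_of_lt (by omega), ZMod.val_cast_of_lt (by omega)] at this
      omega
  · intro i hi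
    rfl
  · intro x hx
    simp only [Finset.mem_filter, Finset.mem_product, Finset.mem_range] at hx
    obtain ⟨⟨h1, h2⟩, hsum⟩ := hx
    have hk : ((x.2 : ℕ) : ZMod n) = v - (x.1 : ZMod n) := by linear_combination hsum
    have : (v - (x.1 : ZMod n)).val = x.2 := by
      rw [← hk, ZMod.val_cast_of_lt (by omega)]
    exact Prod.ext rfl this

private lemma prod_eq_pow (K : Type*) [Field K] (n : ℕ) (hn : 2 ≤ n)
    (p : ℕ → Prop) [DecidablePred p] [NeZero n]
    (hcard : ∀ v : ZMod n, ((Finset.range n).filter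
          (fun i => p i ∧ (i : ZMod n) ≠ v+1 ∧ (i : ZMod n) ≠ v+2)).card = n/2 - 1) :
    ∏ i ∈ (Finset.range n).filter p, ∏ k ∈ Finset.range (n-2),
      (X ((i : ZMod n) + (k : ZMod n)) : MvPolynomial (ZMod n) K)
    = ∏ v : ZMod n, (X v : MvPolynomial (ZMod n) K) ^ (n/2 - 1) := by
  rw [← Finset.prod_product']
  rw [show (fun x : ℕ × ℕ => (X ((x.1 : ZMod n) + (x.2 : ZMod n)) : MvPolynomial (ZMod n) K))
      = (fun x : ℕ × ℕ => X ((fun y : ℕ × ℕ => ((y.1 : ZMod n) + (y.2 : ZMod n))) x)) from rfl]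
  rw [← Finset.prod_fiberwise_of_maps_to' (t := Finset.univ)
    (fun x _ => Finset.mem_univ _) (fun v => (X v : MvPolynomial (ZMod n) K))]
  refine Finset.prod_congr rfl fun v _ => ?_
  rw [Finset.prod_const, fiber_card n hn p v, hcard v]

/-- Let `n = 2s` be even and `φ : K[y_1,…,y_n] → K[x_1,…,x_n]` the map sending
`y_j` to `x_j x_{j+1} ⋯ x_{j+n-3}` (indices mod `n`). Then the binomial
`h = ∏_{i ∈ [0,n), i odd} y_i - ∏_{i ∈ [0,n), i even} y_i` lies in the kernel
of `φ`. -/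
theorem h_mem_ker_fiber_map (K : Type*) [Field K] (n : ℕ)
    (hn : 2 ≤ n) (hev : Even n) :
    ((∏ i ∈ (Finset.range n).filter (fun i => Odd i),
        (X (i : ZMod n) : MvPolynomial (ZMod n) K))
      - ∏ i ∈ (Finset.range n).filter (fun i => Even i),
        (X (i : ZMod n) : MvPolynomial (ZMod n) K))
    ∈ RingHom.ker (aeval (R := K)
        (fun j : ZMod n =>
          ∏ i ∈ Finset.range (n - 2),
            (X (j + (i : ZMod n)) : MvPolynomial (ZMod n) K))).toRingHom := by
  haveI : NeZero n := ⟨by omega⟩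
  haveI : Fact (1 < n) := ⟨by omega⟩
  obtain ⟨m, hm⟩ := hev
  have hm2 : n = 2 * m := by omega
  -- counting hypotheses
  have key : ∀ (p : ℕ → Prop) (_ : DecidablePred p),
      (∀ w : ℕ, w < n → (p w ↔ ¬ p ((w+1) % n))) →
      ∀ v : ZMod n, ((Finset.range n).filter
          (fun i => p i ∧ (i : ZMod n) ≠ v+1 ∧ (i : ZMod n) ≠ v+2)).card
        = ((Finset.range n).filter p).card - 1 := by
    intro p _ halt v
    set a := (v+1).val with ha
    set b := (v+2).val with hb
    have halt' : a < n := ZMod.val_lt _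
    have hblt : b < n := ZMod.val_lt _
    have hca : ((a : ℕ) : ZMod n) = v + 1 := ZMod.natCast_rightInverse _
    have hcb : ((b : ℕ) : ZMod n) = v + 2 := ZMod.natCast_rightInverse _
    have hb' : b = (a + 1) % n := by
      rw [hb, ha, show v + 2 = (v+1) + 1 by ring, ZMod.val_add, ZMod.val_one]
    have hab : a ≠ b := by
      intro h
      rcases Nat.lt_or_ge (a+1) n with hlt | hge
      · rw [hb', Nat.mod_eq_of_lt hlt] at h; omega
      · have h1 : a + 1 = n := by omega
        rw [hb', h1, Nat.mod_self] at h; omega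
    -- exactly one of a, b satisfies... we need: among a b, by alternation
    have hpab : (p a ↔ ¬ p b) := by
      have := halt a halt'
      rw [← hb'] at this
      exact this
    -- the element to erase
    rcases Classical.em (p a) with hpa | hpa
    · have hpb : ¬ p b := hpab.1 hpa
      have hset : (Finset.range n).filter
          (fun i => p i ∧ (i : ZMod n) ≠ v+1 ∧ (i : ZMod n) ≠ v+2)
        = ((Finset.range n).filter p).erase a := by
        ext i
        simp only [Finset.mem_erase, Finset.mem_filter, Finset.mem_range]
        constructor
        · rintro ⟨hilt, hpi, h1, h2⟩
          refine ⟨?_, hilt, hpi⟩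
          intro h; apply h1; rw [h, hca]
        · rintro ⟨hne, hilt, hpi⟩
          refine ⟨hilt, hpi, ?_, ?_⟩
          · intro h
            apply hne
            have : ((i:ℕ) : ZMod n) = ((a:ℕ) : ZMod n) := by rw [h, hca]
            have := congrArg ZMod.val this
            rwa [ZMod.val_cast_of_lt hilt, ZMod.val_cast_of_lt halt'] at this
          · intro h
            have : ((i:ℕ) : ZMod n) = ((b:ℕ) : ZMod n) := by rw [h, hcb]
            have := congrArg ZMod.val this
            rw [ZMod.val_cast_of_lt hilt, ZMod.val_cast_of_lt hblt] at this
            exact hpb (this ▸ hpi)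
      rw [hset, Finset.card_erase_of_mem
        (Finset.mem_filter.2 ⟨Finset.mem_range.2 halt', hpa⟩)]
    · have hpb : p b := by
        by_contra h
        exact hpa (hpab.2 h)
      have hset : (Finset.range n).filter
          (fun i => p i ∧ (i : ZMod n) ≠ v+1 ∧ (i : ZMod n) ≠ v+2)
        = ((Finset.range n).filter p).erase b := by
        ext i
        simp only [Finset.mem_erase, Finset.mem_filter, Finset.mem_range]
        constructor
        · rintro ⟨hilt, hpi, h1, h2⟩
          refine ⟨?_, hilt, hpi⟩
          intro h; apply h2; rw [h, hcb]
        · rintro ⟨hne, hilt, hpi⟩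
          refine ⟨hilt, hpi, ?_, ?_⟩
          · intro h
            have : ((i:ℕ) : ZMod n) = ((a:ℕ) : ZMod n) := by rw [h, hca]
            have := congrArg ZMod.val this
            rw [ZMod.val_cast_of_lt hilt, ZMod.val_cast_of_lt halt'] at this
            exact hpa (this ▸ hpi)
          · intro h
            apply hne
            have : ((i:ℕ) : ZMod n) = ((b:ℕ) : ZMod n) := by rw [h, hcb]
            have := congrArg ZMod.val this
            rwa [ZMod.val_cast_of_lt hilt, ZMod.val_cast_of_lt hblt] at this
      rw [hset, Finset.card_erase_of_mem
        (Finset.mem_filter.2 ⟨Finset.mem_range.2 hblt, hpb⟩)]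
  have hodd : ∀ w : ℕ, w < n → (Odd w ↔ ¬ Odd ((w+1) % n)) := by
    intro w hw
    rcases Nat.lt_or_ge (w+1) n with h | h
    · rw [Nat.mod_eq_of_lt h]
      simp [Nat.odd_add_one]
    · have h1 : w + 1 = n := by omega
      have hw1 : w % 2 = 1 := by omega
      rw [h1, Nat.mod_self]
      simp [Nat.odd_iff, hw1]
  have heven : ∀ w : ℕ, w < n → (Even w ↔ ¬ Even ((w+1) % n)) := by
    intro w hw
    rcases Nat.lt_or_ge (w+1) n with h | h
    · rw [Nat.mod_eq_of_lt h]
      simp [Nat.even_add_one]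
    · have h1 : w + 1 = n := by omega
      have hw1 : w % 2 = 1 := by omega
      rw [h1, Nat.mod_self]
      simp [Nat.even_iff, hw1]
  have hcodd : ((Finset.range n).filter (fun i => Odd i)).card = n / 2 := by
    rw [hm2, card_odd_range]; omega
  have hceven : ((Finset.range n).filter (fun i => Even i)).card = n / 2 := by
    rw [hm2, card_even_range]; omega
  rw [RingHom.mem_ker]
  simp only [AlgHom.toRingHom_eq_coe, RingHom.coe_coe, map_sub, map_prod, aeval_X]
  rw [prod_eq_pow K n hn (fun i => Odd i)
      (fun v => by rw [key _ inferInstance hodd v, hcodd]),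
    prod_eq_pow K n hn (fun i => Even i)
      (fun v => by rw [key _ inferInstance heven v, hceven]),
    sub_self]
end
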